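/- arXiv:2512.13385 — 11 statements merged into one kernel-verified Lean document; each statement's English description precedes it below -/
import Mathlib

section
/- Let c ∈ ℝ₊ⁿ, E ∈ ℝ₊ with E < ∑ cᵢ (strict inequality), and let r ∈ ℝ₊ⁿ satisfy ∑ rᵢ = E. If λ₁, λ₂ ≥ 0 both satisfy ∑ᵢ min{cᵢ, rᵢ + λ} = E, then λ₁ = λ₂. -/
lemma historical_lambda_aux (n : ℕ) (c r : Fin n → ℝ) (E : ℝ)
    (hEC : E < ∑ i, c i)
    (l₁ l₂ : ℝ)
    (h₁ : ∑ i, min (c i) (r i + l₁) = E)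
    (h₂ : ∑ i, min (c i) (r i + l₂) = E)
    (hlt : l₁ < l₂) : False := by
  have hle : ∀ i ∈ Finset.univ, min (c i) (r i + l₁) ≤ min (c i) (r i + l₂) := by
    intro i _
    exact min_le_min le_rfl (by linarith)
  have heq : ∀ i ∈ Finset.univ, min (c i) (r i + l₁) = min (c i) (r i + l₂) :=
    ((Finset.sum_eq_sum_iff_of_le hle).mp (h₁.trans h₂.symm))
  have hci : ∀ i : Fin n, c i ≤ r i + l₁ := by
    intro i
    by_contra h
    push_neg at h
    have e := heq i (Finset.mem_univ i)
    have h1 : min (c i) (r i + l₁) = r i + l₁ := min_eq_right h.le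
    have h2 : r i + l₁ < min (c i) (r i + l₂) := lt_min h (by linarith)
    rw [h1] at e
    linarith
  have : ∑ i, min (c i) (r i + l₁) = ∑ i, c i :=
    Finset.sum_congr rfl (fun i _ => min_eq_left (hci i))
  linarith [h₁ ▸ this]

theorem historical_lambda_unique (n : ℕ) (c r : Fin n → ℝ) (E : ℝ)
    (hc : ∀ i, 0 ≤ c i) (hE0 : 0 ≤ E) (hEC : E < ∑ i, c i)
    (hr : ∀ i, 0 ≤ r i) (hrsum : ∑ i, r i = E)
    (l₁ l₂ : ℝ) (hl₁ : 0 ≤ l₁) (hl₂ : 0 ≤ l₂)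
    (h₁ : ∑ i, min (c i) (r i + l₁) = E)
    (h₂ : ∑ i, min (c i) (r i + l₂) = E) :
    l₁ = l₂ := by
  rcases lt_trichotomy l₁ l₂ with h | h | h
  · exact absurd (historical_lambda_aux n c r E hEC l₁ l₂ h₁ h₂ h) id
  · exact h
  · exact absurd (historical_lambda_aux n c r E hEC l₂ l₁ h₂ h₁ h) id
end

section
/- Let c ∈ ℝ₊ⁿ, E ∈ ℝ₊ with E ≤ ∑ cᵢ, and let r ∈ ℝ₊ⁿ satisfy ∑ rᵢ = E. If λ₁, λ₂ ≥ 0 both satisfy ∑ᵢ min{cᵢ, rᵢ + λ} = E, then min{cᵢ, rᵢ + λ₁} = min{cᵢ, rᵢ + λ₂} for every i. That is, the allocation produced by the historical operator is unique even if λ is not. -/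
theorem historical_allocation_unique (n : ℕ) (c r : Fin n → ℝ) (E : ℝ)
    (hc : ∀ i, 0 ≤ c i) (hE0 : 0 ≤ E) (hEC : E ≤ ∑ i, c i)
    (hr : ∀ i, 0 ≤ r i) (hrsum : ∑ i, r i = E)
    (l₁ l₂ : ℝ) (hl₁ : 0 ≤ l₁) (hl₂ : 0 ≤ l₂)
    (h₁ : ∑ i, min (c i) (r i + l₁) = E)
    (h₂ : ∑ i, min (c i) (r i + l₂) = E) :
    ∀ i, min (c i) (r i + l₁) = min (c i) (r i + l₂) := by
  wlog h : l₁ ≤ l₂ with H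
  · intro i
    exact (H n c r E hc hE0 hEC hr hrsum l₂ l₁ hl₂ hl₁ h₂ h₁ (le_of_not_ge h) i).symm
  have hle : ∀ i ∈ Finset.univ, min (c i) (r i + l₁) ≤ min (c i) (r i + l₂) :=
    fun i _ => min_le_min le_rfl (by linarith)
  have := (Finset.sum_eq_sum_iff_of_le hle).mp (h₁.trans h₂.symm)
  exact fun i => this i (Finset.mem_univ i)
end

section
/- If a standard rule R satisfies order preservation in gains (larger claims receive at least as much), then the historically induced rule preserves it: for any historical claims problem and agents i, j with cᵢ ≥ cⱼ, Δᶜᵢ ≥ Δᶜⱼ and Δˣᵢ ≤ Δˣⱼ, the historical-operator allocation gives agent i at least as much as agent j. -/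
/-- A standard rule: on each valid claims problem it yields a bounded, balanced allocation. -/
def IsRule (n : ℕ) (R : (Fin n → ℝ) → ℝ → (Fin n → ℝ)) : Prop :=
  ∀ c E, (∀ i, 0 ≤ c i) → 0 ≤ E → E ≤ ∑ i, c i →
    (∀ i, 0 ≤ R c E i ∧ R c E i ≤ c i) ∧ ∑ i, R c E i = E

theorem historical_preserves_order_preservation_in_gains
    (n T : ℕ) (c : Fin n → ℝ) (E : ℝ)
    (hc : ∀ i, 0 ≤ c i) (hE0 : 0 ≤ E) (hEC : E ≤ ∑ i, c i)
    (ch xh : Fin T → Fin n → ℝ)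
    (hhist : ∀ t i, 0 ≤ xh t i ∧ xh t i ≤ ch t i)
    (ctil : Fin n → ℝ)
    (hctil : ∀ i, ctil i = c i + ∑ t, (ch t i - xh t i))
    (R : (Fin n → ℝ) → ℝ → (Fin n → ℝ)) (hR : IsRule n R)
    (hOPG : ∀ c' E' i j, (∀ k, 0 ≤ c' k) → 0 ≤ E' → E' ≤ ∑ k, c' k →
      c' i ≥ c' j → R c' E' i ≥ R c' E' j)
    (l : ℝ) (hl : 0 ≤ l)
    (hsum : ∑ i, min (c i) (R ctil E i + l) = E)
    (i j : Fin n) (hcij : c i ≥ c j)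
    (hdc : ∑ t, ch t i ≥ ∑ t, ch t j)
    (hdx : ∑ t, xh t i ≤ ∑ t, xh t j) :
    min (c i) (R ctil E i + l) ≥ min (c j) (R ctil E j + l) := by
  have hctil0 : ∀ k, 0 ≤ ctil k := by
    intro k
    rw [hctil k]
    have : (0:ℝ) ≤ ∑ t, (ch t k - xh t k) :=
      Finset.sum_nonneg fun t _ => sub_nonneg.2 (hhist t k).2
    linarith [hc k]
  have hEc : E ≤ ∑ k, ctil k := by
    refine le_trans hEC (Finset.sum_le_sum fun k _ => ?_)
    rw [hctil k]
    have : (0:ℝ) ≤ ∑ t, (ch t k - xh t k) :=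
      Finset.sum_nonneg fun t _ => sub_nonneg.2 (hhist t k).2
    linarith
  have hctilij : ctil i ≥ ctil j := by
    rw [hctil i, hctil j, Finset.sum_sub_distrib, Finset.sum_sub_distrib]
    linarith
  have hRij := hOPG ctil E i j hctil0 hE0 hEc hctilij
  exact min_le_min hcij (by linarith)
end

section
/- If a standard rule R satisfies securement, then the historically induced rule satisfies securement: Φᵢ(R)(N,c,E,h) ≥ (1/n)·min{cᵢ, E} for every agent i. -/
theorem historical_preserves_securement
    (n T : ℕ) (c : Fin n → ℝ) (E : ℝ)
    (hc : ∀ i, 0 ≤ c i) (hE0 : 0 ≤ E) (hEC : E ≤ ∑ i, c i)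
    (ch xh : Fin T → Fin n → ℝ)
    (hhist : ∀ t i, 0 ≤ xh t i ∧ xh t i ≤ ch t i)
    (ctil : Fin n → ℝ)
    (hctil : ∀ i, ctil i = c i + ∑ t, (ch t i - xh t i))
    (R : (Fin n → ℝ) → ℝ → (Fin n → ℝ)) (hR : IsRule n R)
    (hSec : ∀ c' E' i, (∀ k, 0 ≤ c' k) → 0 ≤ E' → E' ≤ ∑ k, c' k →
      R c' E' i ≥ (1 / (n : ℝ)) * min (c' i) E')
    (l : ℝ) (hl : 0 ≤ l)
    (hsum : ∑ i, min (c i) (R ctil E i + l) = E) :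
    ∀ i, min (c i) (R ctil E i + l) ≥ (1 / (n : ℝ)) * min (c i) E := by
  intro i
  have hle : ∀ k, c k ≤ ctil k := by
    intro k
    rw [hctil k]
    have : (0:ℝ) ≤ ∑ t, (ch t k - xh t k) :=
      Finset.sum_nonneg fun t _ => sub_nonneg.mpr (hhist t k).2
    linarith
  have hctil0 : ∀ k, 0 ≤ ctil k := fun k => le_trans (hc k) (hle k)
  have hEC' : E ≤ ∑ k, ctil k :=
    le_trans hEC (Finset.sum_le_sum fun k _ => hle k)
  have hsec := hSec ctil E i hctil0 hE0 hEC'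
  have hmin : min (c i) E ≤ min (ctil i) E := min_le_min (hle i) le_rfl
  have hn : (0:ℝ) ≤ 1 / (n:ℝ) := by positivity
  have h1 : (1 / (n : ℝ)) * min (c i) E ≤ R ctil E i + l := by
    have := mul_le_mul_of_nonneg_left hmin hn
    linarith
  have hmin0 : 0 ≤ min (c i) E := le_min (hc i) hE0
  have hn1 : (1 / (n : ℝ)) ≤ 1 := by
    have : (1:ℝ) ≤ (n:ℝ) := by exact_mod_cast Nat.one_le_iff_ne_zero.mpr (Nat.pos_of_ne_zero (by rintro rfl; exact i.elim0)).ne'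
    rw [div_le_one (by linarith)]; linarith
  have h2 : (1 / (n : ℝ)) * min (c i) E ≤ c i := by
    calc (1 / (n : ℝ)) * min (c i) E ≤ 1 * min (c i) E :=
          mul_le_mul_of_nonneg_right hn1 hmin0
      _ = min (c i) E := one_mul _
      _ ≤ c i := min_le_left _ _
  exact le_min h2 h1
end

section
/- If a standard rule R is resource monotonic, then the historically induced rule is resource monotonic: for E' > E with E' ≤ ∑ cᵢ, Φᵢ(R)(N,c,E',h) ≥ Φᵢ(R)(N,c,E,h) for every agent i. -/
theorem historical_preserves_resource_monotonicity
    (n T : ℕ) (c : Fin n → ℝ) (E E' : ℝ)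
    (hc : ∀ i, 0 ≤ c i) (hE0 : 0 ≤ E) (hEE' : E < E') (hE'C : E' ≤ ∑ i, c i)
    (ch xh : Fin T → Fin n → ℝ)
    (hhist : ∀ t i, 0 ≤ xh t i ∧ xh t i ≤ ch t i)
    (ctil : Fin n → ℝ)
    (hctil : ∀ i, ctil i = c i + ∑ t, (ch t i - xh t i))
    (R : (Fin n → ℝ) → ℝ → (Fin n → ℝ)) (hR : IsRule n R)
    (hRM : ∀ c' F F', (∀ k, 0 ≤ c' k) → 0 ≤ F → F < F' → F' ≤ ∑ k, c' k →
      ∀ i, R c' F i ≤ R c' F' i)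
    (l l' : ℝ) (hl : 0 ≤ l) (hl' : 0 ≤ l')
    (hsum : ∑ i, min (c i) (R ctil E i + l) = E)
    (hsum' : ∑ i, min (c i) (R ctil E' i + l') = E') :
    ∀ i, min (c i) (R ctil E' i + l') ≥ min (c i) (R ctil E i + l) := by
  have hctilnn : ∀ i, 0 ≤ ctil i := by
    intro i; rw [hctil]
    have h1 : 0 ≤ ∑ t, (ch t i - xh t i) :=
      Finset.sum_nonneg fun t _ => sub_nonneg.2 (hhist t i).2
    linarith [hc i]
  have hcsum : ∑ i, c i ≤ ∑ i, ctil i := by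
    refine Finset.sum_le_sum fun i _ => ?_
    rw [hctil]
    have h1 : 0 ≤ ∑ t, (ch t i - xh t i) :=
      Finset.sum_nonneg fun t _ => sub_nonneg.2 (hhist t i).2
    linarith
  have hE'ctil : E' ≤ ∑ i, ctil i := hE'C.trans hcsum
  have hmono : ∀ i, R ctil E i ≤ R ctil E' i :=
    hRM ctil E E' hctilnn hE0 hEE' hE'ctil
  intro i
  rcases le_or_gt l l' with h | h
  · exact min_le_min le_rfl (add_le_add (hmono i) h)
  · have hREsum : ∑ j, R ctil E j = E :=
      (hR ctil E hctilnn hE0 ((hEE'.trans_le hE'ctil).le)).2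
    have hRE'sum : ∑ j, R ctil E' j = E' :=
      (hR ctil E' hctilnn (hE0.trans hEE'.le) hE'ctil).2
    set d : Fin n → ℝ := fun j => min (c j - R ctil E j) l with hd
    set d' : Fin n → ℝ := fun j => min (c j - R ctil E' j) l' with hd'
    have hdle : ∀ j ∈ Finset.univ, d' j ≤ d j := fun j _ =>
      min_le_min (sub_le_sub_left (hmono j) _) h.le
    have key : ∀ (F lam : ℝ) (j : Fin n),
        min (c j) (R ctil F j + lam) = R ctil F j + min (c j - R ctil F j) lam := by
      intro F lam j
      rcases le_total (c j) (R ctil F j + lam) with hle | hle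
      · rw [min_eq_left hle,
          min_eq_left (show c j - R ctil F j ≤ lam by linarith)]
        ring
      · rw [min_eq_right hle,
          min_eq_right (show lam ≤ c j - R ctil F j by linarith)]
    have hdsum : ∑ j, d j = 0 := by
      have h2 : ∑ j, (R ctil E j + d j) = E := by
        have h3 : ∑ j, (R ctil E j + d j) = ∑ j, min (c j) (R ctil E j + l) :=
          Finset.sum_congr rfl fun j _ => (key E l j).symm
        rw [h3, hsum]
      rw [Finset.sum_add_distrib, hREsum] at h2
      linarith
    have hd'sum : ∑ j, d' j = 0 := by
      have h2 : ∑ j, (R ctil E' j + d' j) = E' := by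
        have h3 : ∑ j, (R ctil E' j + d' j) = ∑ j, min (c j) (R ctil E' j + l') :=
          Finset.sum_congr rfl fun j _ => (key E' l' j).symm
        rw [h3, hsum']
      rw [Finset.sum_add_distrib, hRE'sum] at h2
      linarith
    have heq : ∀ j ∈ Finset.univ, d' j = d j :=
      (Finset.sum_eq_sum_iff_of_le hdle).1 (by rw [hdsum, hd'sum])
    have hdi : d' i = d i := heq i (Finset.mem_univ i)
    rw [ge_iff_le, key E l i, key E' l' i]
    show R ctil E i + d i ≤ R ctil E' i + d' i
    rw [hdi]
    exact add_le_add_left (hmono i) _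
end

section
/- Suppose r, r' ∈ ℝ₊ⁿ with ∑rᵢ = E, ∑r'ᵢ = E', E ≤ E' ≤ ∑cᵢ, and r ≤ r' componentwise. Let λ, λ' ≥ 0 satisfy ∑ᵢ min{cᵢ, rᵢ + λ} = E and ∑ᵢ min{cᵢ, r'ᵢ + λ'} = E'. Then min{cᵢ, rᵢ + λ} ≤ min{cᵢ, r'ᵢ + λ'} for every i. -/
theorem min_truncation_shift_monotone (n : ℕ) (c r r' : Fin n → ℝ) (E E' : ℝ)
    (hc : ∀ i, 0 ≤ c i)
    (hr : ∀ i, 0 ≤ r i) (hr' : ∀ i, 0 ≤ r' i)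
    (hrsum : ∑ i, r i = E) (hr'sum : ∑ i, r' i = E')
    (hEE' : E ≤ E') (hE'C : E' ≤ ∑ i, c i)
    (hrr' : ∀ i, r i ≤ r' i)
    (l l' : ℝ) (hl : 0 ≤ l) (hl' : 0 ≤ l')
    (hsum : ∑ i, min (c i) (r i + l) = E)
    (hsum' : ∑ i, min (c i) (r' i + l') = E') :
    ∀ i, min (c i) (r i + l) ≤ min (c i) (r' i + l') := by
  intro i
  by_contra h
  push_neg at h
  have key : ∀ j, min (c j) (r' j + l') ≤ min (c j) (r j + l) + (r' j - r j) := by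
    intro j
    have hd : 0 ≤ r' j - r j := by linarith [hrr' j]
    -- need l' ≤ l for the second branch
    have h1 : min (c i) (r' i + l') < c i := lt_of_lt_of_le h (min_le_left _ _)
    have h2 : min (c i) (r' i + l') < r i + l := lt_of_lt_of_le h (min_le_right _ _)
    have hx : r' i + l' < c i := by
      by_contra hx
      push_neg at hx
      rw [min_eq_left hx] at h1
      exact lt_irrefl _ h1
    rw [min_eq_right hx.le] at h2
    have hll : l' < l := by linarith [hrr' i]
    rcases le_total (c j) (r j + l) with hcle | hcle
    · rw [min_eq_left hcle]
      have := min_le_left (c j) (r' j + l')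
      linarith
    · rw [min_eq_right hcle]
      have := min_le_right (c j) (r' j + l')
      linarith
  have keyi : min (c i) (r' i + l') < min (c i) (r i + l) + (r' i - r i) := by
    have := hrr' i
    linarith
  have hstrict : ∑ j, min (c j) (r' j + l') <
      ∑ j, (min (c j) (r j + l) + (r' j - r j)) :=
    Finset.sum_lt_sum (fun j _ => key j) ⟨i, Finset.mem_univ i, keyi⟩
  rw [Finset.sum_add_distrib, Finset.sum_sub_distrib, hsum, hrsum, hr'sum, hsum'] at hstrict
  linarith
end

section
/- If a standard rule R is scale invariant, then the historically induced rule is scale invariant: for any ρ > 0, Φ(R)(N, ρc, ρE, ρh) = ρ·Φ(R)(N,c,E,h), where ρh scales all past claims and awards by ρ. -/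
theorem historical_preserves_scale_invariance
    (n T : ℕ) (c : Fin n → ℝ) (E : ℝ) (ρ : ℝ) (hρ : 0 < ρ)
    (hc : ∀ i, 0 ≤ c i) (hE0 : 0 ≤ E) (hEC : E ≤ ∑ i, c i)
    (ch xh : Fin T → Fin n → ℝ)
    (hhist : ∀ t i, 0 ≤ xh t i ∧ xh t i ≤ ch t i)
    (ctil : Fin n → ℝ)
    (hctil : ∀ i, ctil i = c i + ∑ t, (ch t i - xh t i))
    (R : (Fin n → ℝ) → ℝ → (Fin n → ℝ)) (hR : IsRule n R)
    (hSI : ∀ c' E' (σ : ℝ), (∀ k, 0 ≤ c' k) → 0 ≤ E' → E' ≤ ∑ k, c' k → 0 < σ →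
      ∀ i, R (fun k => σ * c' k) (σ * E') i = σ * R c' E' i)
    (l l' : ℝ) (hl : 0 ≤ l) (hl' : 0 ≤ l')
    (hsum : ∑ i, min (c i) (R ctil E i + l) = E)
    (hsum' : ∑ i, min (ρ * c i) (R (fun k => ρ * ctil k) (ρ * E) i + l') = ρ * E) :
    ∀ i, min (ρ * c i) (R (fun k => ρ * ctil k) (ρ * E) i + l') =
      ρ * min (c i) (R ctil E i + l) := by
  have hct0 : ∀ k, 0 ≤ ctil k := by
    intro k
    rw [hctil]
    have : 0 ≤ ∑ t, (ch t k - xh t k) :=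
      Finset.sum_nonneg fun t _ => sub_nonneg.2 (hhist t k).2
    linarith [hc k]
  have hEC' : E ≤ ∑ k, ctil k := by
    refine hEC.trans (Finset.sum_le_sum fun k _ => ?_)
    rw [hctil]
    have : 0 ≤ ∑ t, (ch t k - xh t k) :=
      Finset.sum_nonneg fun t _ => sub_nonneg.2 (hhist t k).2
    linarith
  have hSIapp : ∀ j, R (fun k => ρ * ctil k) (ρ * E) j = ρ * R ctil E j :=
    hSI ctil E ρ hct0 hE0 hEC' hρ
  -- both λ choices give the same sums
  have key : ∀ j, min (ρ * c j) (ρ * R ctil E j + l') =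
      min (ρ * c j) (ρ * R ctil E j + ρ * l) := by
    have hsumA : ∑ j, min (ρ * c j) (ρ * R ctil E j + l') = ρ * E := by
      rw [← hsum']; exact Finset.sum_congr rfl fun j _ => by rw [hSIapp j]
    have hsumB : ∑ j, min (ρ * c j) (ρ * R ctil E j + ρ * l) = ρ * E := by
      have : ∀ j, min (ρ * c j) (ρ * R ctil E j + ρ * l) =
          ρ * min (c j) (R ctil E j + l) := by
        intro j
        rw [mul_min_of_nonneg _ _ hρ.le, mul_add]
      rw [Finset.sum_congr rfl fun j _ => this j, ← Finset.mul_sum, hsum]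
    rcases le_total l' (ρ * l) with h | h
    · have hle : ∀ j ∈ Finset.univ, min (ρ * c j) (ρ * R ctil E j + l') ≤
          min (ρ * c j) (ρ * R ctil E j + ρ * l) := fun j _ =>
        min_le_min le_rfl (by linarith)
      intro j
      exact (Finset.sum_eq_sum_iff_of_le hle).1 (hsumA.trans hsumB.symm) j
        (Finset.mem_univ j)
    · have hle : ∀ j ∈ Finset.univ, min (ρ * c j) (ρ * R ctil E j + ρ * l) ≤
          min (ρ * c j) (ρ * R ctil E j + l') := fun j _ =>
        min_le_min le_rfl (by linarith)
      intro j
      exact ((Finset.sum_eq_sum_iff_of_le hle).1 (hsumB.trans hsumA.symm) j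
        (Finset.mem_univ j)).symm
  intro i
  rw [hSIapp i, key i, mul_min_of_nonneg _ _ hρ.le, mul_add]
end

section
/- The historical operator satisfies non-arbitrariness: if Φᵢ(R)(N,c,E,h) = cᵢ and Rᵢ(N,c̃,E) < cᵢ, then for every j with Φⱼ(R)(N,c,E,h) < cⱼ one has Φᵢ(R)(N,c,E,h) − Rᵢ(N,c̃,E) ≤ Φⱼ(R)(N,c,E,h) − Rⱼ(N,c̃,E). -/
theorem historical_operator_non_arbitrariness
    (n T : ℕ) (c : Fin n → ℝ) (E : ℝ)
    (hc : ∀ i, 0 ≤ c i) (hE0 : 0 ≤ E) (hEC : E ≤ ∑ i, c i)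
    (ch xh : Fin T → Fin n → ℝ)
    (hhist : ∀ t i, 0 ≤ xh t i ∧ xh t i ≤ ch t i)
    (ctil : Fin n → ℝ)
    (hctil : ∀ i, ctil i = c i + ∑ t, (ch t i - xh t i))
    (R : (Fin n → ℝ) → ℝ → (Fin n → ℝ)) (hR : IsRule n R)
    (l : ℝ) (hl : 0 ≤ l)
    (hsum : ∑ i, min (c i) (R ctil E i + l) = E)
    (i : Fin n)
    (hi : min (c i) (R ctil E i + l) = c i)
    (hRi : R ctil E i < c i) :
    ∀ j, min (c j) (R ctil E j + l) < c j →
      min (c i) (R ctil E i + l) - R ctil E i ≤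
        min (c j) (R ctil E j + l) - R ctil E j := by
  intro j hj
  have h1 : c i ≤ R ctil E i + l := min_eq_left_iff.mp hi
  have h2 : min (c j) (R ctil E j + l) = R ctil E j + l := by
    rcases min_cases (c j) (R ctil E j + l) with ⟨h, _⟩ | ⟨h, _⟩
    · rw [h] at hj; linarith
    · exact h
  rw [hi, h2]; linarith
end

section
/- Let r, y ∈ ℝⁿ and c ∈ ℝ₊ⁿ satisfy: ∑ yᵢ = ∑ rᵢ, 0 ≤ yᵢ ≤ cᵢ for all i; (balanced treatment) for all i, j with yᵢ < cᵢ and yⱼ < cⱼ, yᵢ − rᵢ = yⱼ − rⱼ; and (non-arbitrariness) for all i with yᵢ = cᵢ and rᵢ < cᵢ, and all j with yⱼ < cⱼ, yᵢ − rᵢ ≤ yⱼ − rⱼ. Then for every i, if rᵢ ≥ cᵢ then yᵢ = cᵢ (present boundedness). -/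
theorem bt_na_imply_present_boundedness (n : ℕ) (c r y : Fin n → ℝ)
    (hc : ∀ i, 0 ≤ c i)
    (hsum : ∑ i, y i = ∑ i, r i)
    (hy : ∀ i, 0 ≤ y i ∧ y i ≤ c i)
    (hBT : ∀ i j, y i < c i → y j < c j → y i - r i = y j - r j)
    (hNA : ∀ i j, y i = c i → r i < c i → y j < c j → y i - r i ≤ y j - r j) :
    ∀ i, r i ≥ c i → y i = c i := by
  intro i hri
  by_contra hne
  have hlt : y i < c i := lt_of_le_of_ne (hy i).2 hne
  have hd : y i - r i < 0 := by linarith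
  have hzero : ∑ j, (y j - r j) = 0 := by
    rw [Finset.sum_sub_distrib, hsum, sub_self]
  have hneg : ∑ j, (y j - r j) < 0 := by
    have := Finset.sum_lt_sum (f := fun j => y j - r j) (g := fun _ => (0 : ℝ))
      (s := Finset.univ)
      (by
        intro j _
        show y j - r j ≤ 0
        rcases lt_or_eq_of_le (hy j).2 with h | h
        · have := hBT i j hlt h; linarith
        · rcases lt_or_ge (r j) (c j) with h' | h'
          · have := hNA j i h h' hlt; linarith
          · linarith)
      ⟨i, Finset.mem_univ i, by simpa using hd⟩
    simpa using this
  linarith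
end

section
/- Let c ∈ ℝ₊ⁿ with 0 ≤ E ≤ ∑cᵢ, r ∈ ℝ₊ⁿ with ∑ rᵢ = E, and y ∈ ℝⁿ with 0 ≤ yᵢ ≤ cᵢ and ∑ yᵢ = E. Suppose y satisfies balanced treatment and non-arbitrariness with respect to r (as defined below). Then yᵢ = min{cᵢ, rᵢ + λ} for every i, where λ ≥ 0 is any value with ∑ᵢ min{cᵢ, rᵢ + λ} = E. In other words, the allocation is uniquely determined by these two axioms and equals the historical-operator allocation. -/
theorem characterization_historical_operator (n : ℕ) (c r y : Fin n → ℝ) (E : ℝ)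
    (hc : ∀ i, 0 ≤ c i) (hE0 : 0 ≤ E) (hEC : E ≤ ∑ i, c i)
    (hr : ∀ i, 0 ≤ r i) (hrsum : ∑ i, r i = E)
    (hy : ∀ i, 0 ≤ y i ∧ y i ≤ c i) (hysum : ∑ i, y i = E)
    (hBT : ∀ i j, y i < c i → y j < c j → y i - r i = y j - r j)
    (hNA : ∀ i j, y i = c i → r i < c i → y j < c j → y i - r i ≤ y j - r j) :
    ∀ l : ℝ, 0 ≤ l → (∑ i, min (c i) (r i + l) = E) →
      ∀ i, y i = min (c i) (r i + l) := by
  intro l hl hsum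
  have hle : ∀ i, min (c i) (r i + l) ≤ y i := by
    by_contra h
    push_neg at h
    obtain ⟨i, hi⟩ := h
    have hi1 : y i < c i := lt_of_lt_of_le hi (min_le_left _ _)
    have hi2 : y i < r i + l := lt_of_lt_of_le hi (min_le_right _ _)
    have hj : ∃ j, min (c j) (r j + l) < y j := by
      by_contra hj
      push_neg at hj
      have : ∑ k, y k < ∑ k, min (c k) (r k + l) :=
        Finset.sum_lt_sum (fun k _ => hj k) ⟨i, Finset.mem_univ i, hi⟩
      rw [hysum, hsum] at this
      exact lt_irrefl E this
    obtain ⟨j, hjlt⟩ := hj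
    have hjc : y j ≤ c j := (hy j).2
    have hj2 : r j + l < y j := by
      rcases min_lt_iff.mp hjlt with h1 | h1
      · linarith
      · exact h1
    rcases lt_or_eq_of_le hjc with hlt | heq
    · have := hBT i j hi1 hlt
      linarith
    · have hrc : r j < c j := by linarith
      have := hNA j i heq hrc hi1
      linarith
  have key := (Finset.sum_eq_sum_iff_of_le (fun k _ => hle k)).mp (by rw [hysum, hsum])
  exact fun i => (key i (Finset.mem_univ i)).symm
end

section
/- If y satisfies the hypotheses of the characterization (boundedness, balance, balanced treatment, non-arbitrariness w.r.t. r), then for every agent j with yⱼ < cⱼ one has yⱼ = rⱼ + (∑_{i: yᵢ = cᵢ} (rᵢ − cᵢ))/|{i : yᵢ < cᵢ}|. -/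
open Finset

theorem characterization_rationed_formula (n : ℕ) (c r y : Fin n → ℝ) (E : ℝ)
    (hc : ∀ i, 0 ≤ c i) (hE0 : 0 ≤ E) (hEC : E ≤ ∑ i, c i)
    (hr : ∀ i, 0 ≤ r i) (hrsum : ∑ i, r i = E)
    (hy : ∀ i, 0 ≤ y i ∧ y i ≤ c i) (hysum : ∑ i, y i = E)
    (hBT : ∀ i j, y i < c i → y j < c j → y i - r i = y j - r j)
    (hNA : ∀ i j, y i = c i → r i < c i → y j < c j → y i - r i ≤ y j - r j)
    (hne : (univ.filter (fun i => y i < c i)).Nonempty) :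
    ∀ j, y j < c j →
      y j = r j + (∑ i ∈ univ.filter (fun i => y i = c i), (r i - c i)) /
        ((univ.filter (fun i => y i < c i)).card : ℝ) := by
  intro j hj
  set S := univ.filter (fun i => y i < c i) with hS
  set T := univ.filter (fun i => y i = c i) with hT
  have hcard : 0 < (S.card : ℝ) := by
    exact_mod_cast Finset.card_pos.mpr hne
  have hsumS : ∑ i ∈ S, (y i - r i) = (S.card : ℝ) * (y j - r j) := by
    rw [Finset.sum_congr rfl (fun i hi => hBT i j (Finset.mem_filter.mp hi).2 hj)]
    rw [Finset.sum_const, nsmul_eq_mul]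
  have hcompl : T = Sᶜ := by
    ext i
    simp only [hS, hT, Finset.mem_filter, Finset.mem_compl, Finset.mem_univ, true_and]
    constructor
    · intro h; simp [h]
    · intro h
      rcases lt_or_eq_of_le (hy i).2 with h' | h'
      · exact absurd h' h
      · exact h'
  have htotal : ∑ i ∈ S, (y i - r i) + ∑ i ∈ T, (y i - r i) = 0 := by
    rw [hcompl, Finset.sum_add_sum_compl]
    simp [Finset.sum_sub_distrib, hysum, hrsum]
  have hTsum : ∑ i ∈ T, (y i - r i) = -∑ i ∈ T, (r i - c i) := by
    rw [← Finset.sum_neg_distrib]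
    refine Finset.sum_congr rfl fun i hi => ?_
    have := (Finset.mem_filter.mp hi).2
    rw [this]; ring
  have key : (S.card : ℝ) * (y j - r j) = ∑ i ∈ T, (r i - c i) := by
    have := htotal
    rw [hsumS, hTsum] at this
    linarith
  have : y j - r j = (∑ i ∈ T, (r i - c i)) / (S.card : ℝ) := by
    rw [eq_div_iff hcard.ne', mul_comm]
    exact key
  linarith [this]
end
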